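/- Let F be a nonempty face of K. The following are equivalent: (i) F is an (R×{0})-minimal face of K, i.e., every y ∈ F satisfies y − εc ∉ K for all ε > 0 (equivalently, y ∉ K + cone{c}∖{0}); (ii) there exists w ∈ Γ(F) such that cᵀw < 0. -/

import Mathlib

open Matrix Set Pointwise

noncomputable section

/-- `cone B = {l • x : l ≥ 0, x ∈ conv B}` -/
def coneOf {E : Type*} [AddCommGroup E] [Module ℝ E] (B : Set E) : Set E :=
  {y | ∃ l : ℝ, 0 ≤ l ∧ ∃ x ∈ convexHull ℝ B, y = l • x}

/-- `F` is a face of the convex set `B`. -/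
def IsFaceOf {E : Type*} [AddCommGroup E] [Module ℝ E] (F B : Set E) : Prop :=
  Convex ℝ F ∧ F ⊆ B ∧
    ∀ y ∈ B, ∀ z ∈ B, ∀ l : ℝ, 0 < l → l < 1 → l • y + (1 - l) • z ∈ F → y ∈ F ∧ z ∈ F

/-- recession cone `0⁺B` of a convex set. -/
def recCone {E : Type*} [AddCommGroup E] [Module ℝ E] (B : Set E) : Set E :=
  {d | ∀ x ∈ B, ∀ t : ℝ, 0 ≤ t → x + t • d ∈ B}

/-- lineality space `L(B) = 0⁺B ∩ (−0⁺B)`. -/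
def linealOf {E : Type*} [AddCommGroup E] [Module ℝ E] (B : Set E) : Set E :=
  recCone B ∩ -recCone B

/-- dimension of (the affine hull of) a set. -/
def sdim {E : Type*} [AddCommGroup E] [Module ℝ E] (B : Set E) : ℕ :=
  Module.finrank ℝ (vectorSpan ℝ B)

def IsPolyhedron {d : ℕ} (B : Set (Fin d → ℝ)) : Prop :=
  ∃ (k : ℕ) (W : Matrix (Fin k) (Fin d) ℝ) (v : Fin k → ℝ), B = {x | v ≤ W.mulVec x}

/-- orthogonal complement (as a set) of a set of vectors. -/
def orthSet {d : ℕ} (L : Set (Fin d → ℝ)) : Set (Fin d → ℝ) :=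
  {y | ∀ z ∈ L, y ⬝ᵥ z = 0}

/-- polar cone `K° = {w : ∀ y ∈ K, wᵀy ≤ 0}`. -/
def polarCone {d : ℕ} (K : Set (Fin d → ℝ)) : Set (Fin d → ℝ) :=
  {w | ∀ y ∈ K, w ⬝ᵥ y ≤ 0}

/-- the last index of `Fin q` (1-based index `q`). -/
def lastIdx (q : ℕ) (hq : 0 < q) : Fin q := ⟨q - 1, by omega⟩

/-- `y ↦ (y,1)`. -/
def lift1 {q : ℕ} (y : Fin q → ℝ) : Fin (q + 1) → ℝ := Fin.snoc y 1

/-- `y ↦ (y,0)`. -/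
def lift0 {q : ℕ} (y : Fin q → ℝ) : Fin (q + 1) → ℝ := Fin.snoc y 0

/-- `p(y) = (y₁,…,y_q)`. -/
def projq {q : ℕ} (y : Fin (q + 1) → ℝ) : Fin q → ℝ := fun i => y i.castSucc

/-- `Φ(B) = cl cone (B × {1})`. -/
def PhiMap {q : ℕ} (B : Set (Fin q → ℝ)) : Set (Fin (q + 1) → ℝ) :=
  closure (coneOf (lift1 '' B))

/-- the block matrix `G = (A; −ZᵀP; 0)`. -/
def Gmat {m n q r : ℕ} (A : Matrix (Fin m) (Fin n) ℝ) (P : Matrix (Fin q) (Fin n) ℝ)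
    (Z : Matrix (Fin q) (Fin r) ℝ) : Matrix (Fin (m + r + 1)) (Fin n) ℝ :=
  fun i j =>
    if h : (i : ℕ) < m then A ⟨i, h⟩ j
    else if h2 : (i : ℕ) < m + r then -(∑ l : Fin q, Z l ⟨(i : ℕ) - m, by omega⟩ * P l j)
    else 0

/-- the block matrix `H` with rows `(0, −b)`, `(Zᵀ, 0)` and `(0,…,0,1)`. -/
def Hmat {m q r : ℕ} (b : Fin m → ℝ) (Z : Matrix (Fin q) (Fin r) ℝ) :
    Matrix (Fin (m + r + 1)) (Fin (q + 1)) ℝ :=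
  fun i j =>
    if h : (i : ℕ) < m then (if (j : ℕ) = q then -b ⟨i, h⟩ else 0)
    else if h2 : (i : ℕ) < m + r then
      (if hj : (j : ℕ) < q then Z ⟨j, hj⟩ ⟨(i : ℕ) - m, by omega⟩ else 0)
    else (if (j : ℕ) = q then 1 else 0)

/-- dual objective `D(u,w) = (w₁,…,w_{q−1}, bᵀu)`. -/
def Dmap {m q : ℕ} (b : Fin m → ℝ) (uw : (Fin m → ℝ) × (Fin q → ℝ)) : Fin q → ℝ :=
  fun i => if (i : ℕ) < q - 1 then uw.2 i else b ⬝ᵥ uw.1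

/-- `R* = {v : v₁ = ⋯ = v_{q−1} = 0, v_q ≥ 0}`. -/
def RstarSet (q : ℕ) (hq : 0 < q) : Set (Fin q → ℝ) :=
  {v | (∀ i : Fin q, (i : ℕ) < q - 1 → v i = 0) ∧ 0 ≤ v (lastIdx q hq)}

/-- dual feasible set `T`. -/
def Tset {m n q r : ℕ} (A : Matrix (Fin m) (Fin n) ℝ) (P : Matrix (Fin q) (Fin n) ℝ)
    (Z : Matrix (Fin q) (Fin r) ℝ) (cbar : Fin q → ℝ) :
    Set ((Fin m → ℝ) × (Fin q → ℝ)) :=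
  {uw | ∃ v : Fin r → ℝ, 0 ≤ v ∧ uw.2 = Z.mulVec v ∧
    Aᵀ.mulVec uw.1 = Pᵀ.mulVec uw.2 ∧ cbar ⬝ᵥ uw.2 = 1 ∧ 0 ≤ uw.1}

/-- `φ(y,w) = Σ_{i<q} y_i w_i + y_q (1 − Σ_{i<q} c̄_i w_i) − w_q`. -/
def phiFn {q : ℕ} (hq : 0 < q) (cbar : Fin q → ℝ) (y w : Fin q → ℝ) : ℝ :=
  (∑ i : Fin q, if (i : ℕ) < q - 1 then y i * w i else 0)
    + y (lastIdx q hq) * (1 - ∑ i : Fin q, if (i : ℕ) < q - 1 then cbar i * w i else 0)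
    - w (lastIdx q hq)

/-- duality map `Ψ(F*) = ⋂_{w ∈ F*} {y ∈ Pset : φ(y,w) = 0}`. -/
def PsiMap {q : ℕ} (hq : 0 < q) (cbar : Fin q → ℝ) (Pset : Set (Fin q → ℝ))
    (Fstar : Set (Fin q → ℝ)) : Set (Fin q → ℝ) :=
  ⋂ w ∈ Fstar, {y ∈ Pset | phiFn hq cbar y w = 0}

/-- `My = (−y₁,…,−y_{q−1}, c̄₁y₁+⋯+c̄_{q−1}y_{q−1} − y_{q+1}, y_q)`. -/
def Mmap {q : ℕ} (hq : 0 < q) (cbar : Fin q → ℝ) (y : Fin (q + 1) → ℝ) : Fin (q + 1) → ℝ :=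
  fun i =>
    if (i : ℕ) < q - 1 then -y i
    else if (i : ℕ) = q - 1 then
      (∑ j : Fin q, if (j : ℕ) < q - 1 then cbar j * y j.castSucc else 0) - y (Fin.last q)
    else y ((lastIdx q hq).castSucc)

/-- `M⁻¹w = (−w₁,…,−w_{q−1}, w_{q+1}, −cᵀw)` where `c = (c̄,0)`. -/
def MinvMap {q : ℕ} (cbar : Fin q → ℝ) (w : Fin (q + 1) → ℝ) : Fin (q + 1) → ℝ :=
  fun i =>
    if (i : ℕ) < q - 1 then -w i
    else if (i : ℕ) = q - 1 then w (Fin.last q)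
    else -((Fin.snoc cbar 0 : Fin (q + 1) → ℝ) ⬝ᵥ w)

/-- `p*(w) = (w₁,…,w_{q−1},w_{q+1})`. -/
def pstarMap {q : ℕ} (w : Fin (q + 1) → ℝ) : Fin q → ℝ :=
  fun i => if (i : ℕ) < q - 1 then w i.castSucc else w (Fin.last q)

/-- `y` generates an extreme ray of the pointed convex cone `Q`. -/
def IsExtremeDir {E : Type*} [AddCommGroup E] [Module ℝ E] (Q : Set E) (y : E) : Prop :=
  y ∈ Q ∧ y ≠ 0 ∧ IsFaceOf (coneOf {y}) Q

/-- `σ(u,w) = (u¹, −p(w))` where `u = (u¹,u²,u³) ∈ ℝ^m×ℝ^r×ℝ`. -/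
def sigmaMap {m q r : ℕ} (uw : (Fin (m + r + 1) → ℝ) × (Fin (q + 1) → ℝ)) :
    (Fin m → ℝ) × (Fin q → ℝ) :=
  (fun i => uw.1 (Fin.castLE (by omega) i), -projq uw.2)

section MF
open Finset



open Finset

section FarkasAux
set_option linter.unusedSectionVars false

variable {E : Type*} [NormedAddCommGroup E] [InnerProductSpace ℝ E] [FiniteDimensional ℝ E]

lemma cone_carath {ι : Type*} [Fintype ι] (v : ι → E) (s : Finset ι) :
    ∀ u : ι → ℝ, (∀ i, 0 ≤ u i) → (∀ i ∉ s, u i = 0) →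
    ∃ J : Finset ι, LinearIndependent ℝ (fun j : J => v j) ∧
      ∃ u' : ι → ℝ, (∀ i, 0 ≤ u' i) ∧ (∀ i ∉ J, u' i = 0) ∧
        ∑ i, u' i • v i = ∑ i, u i • v i := by
  classical
  induction s using Finset.strongInductionOn with
  | _ s ih =>
    intro u hu hsupp
    by_cases hLI : LinearIndependent ℝ (fun j : s => v j)
    · exact ⟨s, hLI, u, hu, hsupp, rfl⟩
    obtain ⟨g, hg0, j0, hj0⟩ := Fintype.not_linearIndependent_iff.mp hLI
    -- extend the relation to ι and normalize sign
    have hrel : ∃ c : ι → ℝ, (∀ i ∉ s, c i = 0) ∧ (∑ i, c i • v i = 0) ∧ ∃ i ∈ s, 0 < c i := by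
      set c : ι → ℝ := fun i => if h : i ∈ s then g ⟨i, h⟩ else 0 with hc
      have hcsum : ∑ i, c i • v i = 0 := by
        have h1 : ∑ i, c i • v i = ∑ i ∈ s, c i • v i :=
          (Finset.sum_subset (Finset.subset_univ _)
            (fun i _ hi => by simp [hc, dif_neg hi])).symm
        rw [h1, ← Finset.sum_attach s (fun i => c i • v i)]
        rw [← hg0]
        exact Finset.sum_congr rfl fun j _ => by simp [hc, dif_pos j.2]
      rcases lt_or_gt_of_ne hj0 with hneg | hpos
      · refine ⟨-c, fun i hi => by simp [hc, dif_neg hi], by simpa using congrArg Neg.neg hcsum,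
          j0, j0.2, ?_⟩
        simp only [Pi.neg_apply, hc, dif_pos j0.2]
        simpa using hneg
      · exact ⟨c, fun i hi => by simp [hc, dif_neg hi], hcsum, j0, j0.2, by simp [hc, dif_pos j0.2, hpos]⟩
    obtain ⟨c, hcs, hcsum, i1, hi1s, hi1pos⟩ := hrel
    set Pos := s.filter (fun i => 0 < c i) with hPos
    obtain ⟨i₀, hi₀Pos, hmin⟩ := Finset.exists_min_image Pos (fun i => u i / c i)
      ⟨i1, Finset.mem_filter.mpr ⟨hi1s, hi1pos⟩⟩
    have hi₀s : i₀ ∈ s := (Finset.mem_filter.mp hi₀Pos).1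
    have hci₀ : 0 < c i₀ := (Finset.mem_filter.mp hi₀Pos).2
    set t := u i₀ / c i₀ with htdef
    have ht : 0 ≤ t := div_nonneg (hu i₀) hci₀.le
    set u' : ι → ℝ := fun i => u i - t * c i with hu'def
    have hu' : ∀ i, 0 ≤ u' i := by
      intro i
      by_cases his : i ∈ s
      · by_cases hci : 0 < c i
        · have := hmin i (Finset.mem_filter.mpr ⟨his, hci⟩)
          have h2 : t * c i ≤ u i := by
            rw [htdef] at *
            calc t * c i ≤ (u i / c i) * c i := by nlinarith
            _ = u i := div_mul_cancel₀ _ hci.ne'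
          simp [hu'def]; linarith
        · push_neg at hci
          have : t * c i ≤ 0 := mul_nonpos_of_nonneg_of_nonpos ht hci
          have := hu i
          simp [hu'def]; linarith
      · simp [hu'def, hcs i his, hsupp i his]
    have hsupp' : ∀ i ∉ s.erase i₀, u' i = 0 := by
      intro i hi
      by_cases h : i = i₀
      · subst h; simp [hu'def, htdef, div_mul_cancel₀ _ hci₀.ne']
      · have his : i ∉ s := fun hin => hi (Finset.mem_erase.mpr ⟨h, hin⟩)
        simp [hu'def, hcs i his, hsupp i his]
    · have hsum' : ∑ i, u' i • v i = ∑ i, u i • v i := by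
        simp only [hu'def, sub_smul, Finset.sum_sub_distrib, mul_smul]
        rw [← Finset.smul_sum, hcsum, smul_zero, sub_zero]
      obtain ⟨J, hJ, u'', h1, h2, h3⟩ :=
        ih (s.erase i₀) (Finset.erase_ssubset hi₀s) u' hu' hsupp'
      exact ⟨J, hJ, u'', h1, h2, h3.trans hsum'⟩


lemma isClosed_coneSet {ι : Type*} [Fintype ι] (v : ι → E) :
    IsClosed {x : E | ∃ u : ι → ℝ, (∀ i, 0 ≤ u i) ∧ x = ∑ i, u i • v i} := by
  classical
  have hrw : {x : E | ∃ u : ι → ℝ, (∀ i, 0 ≤ u i) ∧ x = ∑ i, u i • v i}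
      = ⋃ (J : Finset ι) (_ : LinearIndependent ℝ (fun j : J => v j)),
        (fun u : J → ℝ => ∑ j, u j • v (j : ι)) '' {u | ∀ j, 0 ≤ u j} := by
    ext x
    constructor
    · rintro ⟨u, hu, rfl⟩
      obtain ⟨J, hJ, u', hu', hsupp', hsum⟩ := cone_carath v Finset.univ u hu (by simp)
      refine Set.mem_iUnion.mpr ⟨J, Set.mem_iUnion.mpr ⟨hJ, ⟨fun j => u' j, fun j => hu' j, ?_⟩⟩⟩
      have h1 : ∑ j : J, u' (j : ι) • v (j : ι) = ∑ i ∈ J, u' i • v i :=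
        Finset.sum_coe_sort J (fun i => u' i • v i)
      have h2 : ∑ i ∈ J, u' i • v i = ∑ i, u' i • v i :=
        Finset.sum_subset (Finset.subset_univ _)
          (fun i _ hi => by rw [hsupp' i hi, zero_smul])
      show ∑ j : J, u' (j : ι) • v (j : ι) = ∑ i, u i • v i
      rw [h1, h2, hsum]
    · rintro hx
      simp only [Set.mem_iUnion] at hx
      obtain ⟨J, hJ, u, hu, rfl⟩ := hx
      refine ⟨fun i => if h : i ∈ J then u ⟨i, h⟩ else 0, fun i => ?_, ?_⟩
      · by_cases h : i ∈ J <;> simp [h, hu ⟨i, _⟩]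
      · have h2 : ∑ i : ι, (if h : i ∈ J then u ⟨i, h⟩ else 0) • v i
            = ∑ i ∈ J, (if h : i ∈ J then u ⟨i, h⟩ else 0) • v i :=
          (Finset.sum_subset (Finset.subset_univ _) (fun i _ hi => by simp [hi])).symm
        show ∑ j : J, u j • v (j : ι) = ∑ i : ι, (if h : i ∈ J then u ⟨i, h⟩ else 0) • v i
        rw [h2, ← Finset.sum_coe_sort J (fun i => (if h : i ∈ J then u ⟨i, h⟩ else 0) • v i)]
        exact Finset.sum_congr rfl fun j _ => by simp [dif_pos j.2]
  rw [hrw]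
  refine isClosed_iUnion_of_finite fun J => ?_
  by_cases hJ : LinearIndependent ℝ (fun j : J => v j)
  · rw [Set.iUnion_eq_if, if_pos hJ]
    set L : ({x // x ∈ J} → ℝ) →ₗ[ℝ] E :=
      { toFun := fun u => ∑ j, u j • v (j : ι),
        map_add' := fun a b => by simp [add_smul, Finset.sum_add_distrib],
        map_smul' := fun t a => by simp [smul_smul, Finset.smul_sum] } with hL
    have hker : LinearMap.ker L = ⊥ := by
      rw [LinearMap.ker_eq_bot']
      intro uu huu
      exact funext (Fintype.linearIndependent_iff.mp hJ uu huu)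
    have hce := LinearMap.isClosedEmbedding_of_injective hker
    have horth : IsClosed {u : {x // x ∈ J} → ℝ | ∀ j, 0 ≤ u j} := by
      have : {u : {x // x ∈ J} → ℝ | ∀ j, 0 ≤ u j} = ⋂ j, {u | 0 ≤ u j} := by
        ext; simp [Set.mem_iInter]
      rw [this]
      exact isClosed_iInter fun j => isClosed_le continuous_const (continuous_apply j)
    exact hce.isClosedMap _ horth
  · rw [Set.iUnion_eq_if, if_neg hJ]
    exact isClosed_empty

open RealInnerProductSpace in
lemma farkas_sep {ι : Type*} [Fintype ι] (v : ι → E) (b : E)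
    (hb : ¬ ∃ u : ι → ℝ, (∀ i, 0 ≤ u i) ∧ b = ∑ i, u i • v i) :
    ∃ y : E, (∀ i, 0 ≤ ⟪v i, y⟫) ∧ ⟪y, b⟫ < 0 := by
  classical
  set Kc : ConvexCone ℝ E :=
    { carrier := {x | ∃ u : ι → ℝ, (∀ i, 0 ≤ u i) ∧ x = ∑ i, u i • v i},
      smul_mem' := by
        rintro t ht x ⟨u, hu, rfl⟩
        exact ⟨fun i => t * u i, fun i => mul_nonneg ht.le (hu i),
          by simp [Finset.smul_sum, mul_smul]⟩,
      add_mem' := by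
        rintro x ⟨u, hu, rfl⟩ y ⟨u', hu', rfl⟩
        exact ⟨fun i => u i + u' i, fun i => add_nonneg (hu i) (hu' i),
          by simp [add_smul, Finset.sum_add_distrib]⟩ } with hKc
  have hne : (Kc : Set E).Nonempty := ⟨0, ⟨fun _ => 0, fun _ => le_rfl, by simp⟩⟩
  obtain ⟨y, hy1, hy2⟩ :=
    ProperCone.hyperplane_separation' (⟨Kc.toPointedCone
      (.of_nonempty_of_isClosed hne (isClosed_coneSet v)), isClosed_coneSet v⟩ : ProperCone ℝ E) hb
  refine ⟨y, fun i => ?_, by rw [real_inner_comm]; exact hy2⟩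
  refine hy1 (v i) (show ∃ u : ι → ℝ, (∀ k, 0 ≤ u k) ∧ v i = ∑ k, u k • v k from ⟨fun k => if k = i then 1 else 0, fun k => by positivity, ?_⟩)
  simp [ite_smul]

end FarkasAux

section MF
lemma matrix_farkas {ι κ : Type*} [Fintype ι] [Fintype κ] [DecidableEq ι]
    (M : Matrix ι κ ℝ) (d : ι → ℝ)
    (h : ¬ ∃ z : κ → ℝ, ∀ i, d i ≤ M.mulVec z i) :
    ∃ u : ι → ℝ, (∀ i, 0 ≤ u i) ∧ (∀ j, ∑ i, M i j * u i = 0) ∧ 0 < ∑ i, d i * u i := by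
  classical
  set vp : κ ⊕ κ ⊕ ι → (ι → ℝ) :=
    Sum.elim (fun j i => M i j)
      (Sum.elim (fun j i => -M i j) (fun i0 i => if i = i0 then -1 else 0)) with hvp
  let v : κ ⊕ κ ⊕ ι → EuclideanSpace ℝ ι := fun k => WithLp.toLp 2 (vp k)
  have happ : ∀ (u : κ ⊕ κ ⊕ ι → ℝ) (i : ι), (∑ k, u k • vp k) i = ∑ k, u k * vp k i := by
    intro u i; rw [Finset.sum_apply]; simp
  have hb : ¬ ∃ u : κ ⊕ κ ⊕ ι → ℝ, (∀ k, 0 ≤ u k) ∧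
      (WithLp.toLp 2 d : EuclideanSpace ℝ ι) = ∑ k, u k • v k := by
    rintro ⟨u, hu, hsum⟩
    apply h
    have hsum' : d = ∑ k, u k • vp k := by
      have := congrArg WithLp.ofLp hsum
      simpa [v, WithLp.ofLp_sum] using this
    refine ⟨fun j => u (.inl j) - u (.inr (.inl j)), fun i => ?_⟩
    have hi : d i = ∑ k, u k * vp k i := by rw [hsum', happ]
    have hsplit : ∑ k, u k * vp k i
        = ∑ j, u (Sum.inl j) * M i j + (∑ j, u (Sum.inr (Sum.inl j)) * (-M i j)
            + ∑ i0, u (Sum.inr (Sum.inr i0)) * (if i = i0 then (-1:ℝ) else 0)) := by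
      rw [Fintype.sum_sum_type, Fintype.sum_sum_type]
      simp [hvp]
    have hlast : ∑ i0, u (Sum.inr (Sum.inr i0)) * (if i = i0 then (-1:ℝ) else 0)
        = -u (Sum.inr (Sum.inr i)) := by
      rw [Finset.sum_eq_single i]
      · simp
      · intro b _ hb; simp [Ne.symm hb]
      · simp
    have hmv : M.mulVec (fun j => u (.inl j) - u (.inr (.inl j))) i
        = ∑ j, u (Sum.inl j) * M i j - ∑ j, u (Sum.inr (Sum.inl j)) * M i j := by
      simp [Matrix.mulVec, dotProduct, mul_sub, Finset.sum_sub_distrib, mul_comm]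
    have h0 := hu (Sum.inr (Sum.inr i))
    rw [hi, hsplit, hlast, hmv]
    simp only [mul_neg, Finset.sum_neg_distrib]
    linarith
  obtain ⟨y, hy1, hy2⟩ := farkas_sep v (WithLp.toLp 2 d) hb
  have hinner : ∀ k, (inner ℝ (v k) y : ℝ) = ∑ i, vp k i * y i := by
    intro k
    simp [PiLp.inner_apply, RCLike.inner_apply, starRingEnd_apply, star_trivial]
    exact Finset.sum_congr rfl fun i _ => mul_comm _ _
  have hinner2 : (inner ℝ y (WithLp.toLp 2 d : EuclideanSpace ℝ ι) : ℝ) = ∑ i, y i * d i := by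
    simp [PiLp.inner_apply, RCLike.inner_apply, starRingEnd_apply, star_trivial]
    exact Finset.sum_congr rfl fun i _ => mul_comm _ _
  refine ⟨fun i => -(y i), fun i => ?_, fun j => ?_, ?_⟩
  · show (0:ℝ) ≤ -(y i)
    have := hy1 (Sum.inr (Sum.inr i))
    rw [hinner] at this
    have he : ∑ i', vp (Sum.inr (Sum.inr i)) i' * y i' = -(y i) := by
      rw [Finset.sum_eq_single i]
      · simp [hvp]
      · intro b _ hb; simp [hvp, hb]
      · simp
    rw [he] at this; linarith
  · show ∑ i, M i j * -(y i) = 0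
    have h1 := hy1 (Sum.inl j)
    have h2 := hy1 (Sum.inr (Sum.inl j))
    rw [hinner] at h1 h2
    simp only [hvp, Sum.elim_inl, Sum.elim_inr, neg_mul] at h1 h2
    rw [Finset.sum_neg_distrib] at h2
    have : ∑ i, M i j * y i = 0 := le_antisymm (by linarith) h1
    simp only [mul_neg, Finset.sum_neg_distrib, this, neg_zero]
  · show (0:ℝ) < ∑ i, d i * -(y i)
    rw [hinner2] at hy2
    have : ∑ i, d i * (-(y i)) = -∑ i, y i * d i := by
      rw [← Finset.sum_neg_distrib]
      exact Finset.sum_congr rfl fun i _ => by ring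
    rw [this]; linarith

lemma sum_mul_swap {α β : Type*} [Fintype α] [Fintype β] (H : Matrix α β ℝ) (u : α → ℝ) (y : β → ℝ) :
    ∑ k, (∑ i, H i k * u i) * y k = ∑ i, (∑ k, H i k * y k) * u i := by
  simp_rw [Finset.sum_mul]
  rw [Finset.sum_comm]
  exact Finset.sum_congr rfl fun i _ => Finset.sum_congr rfl fun k _ => by ring

def dotLin {p : ℕ} (w : Fin p → ℝ) : (Fin p → ℝ) →ₗ[ℝ] ℝ where
  toFun := fun z => w ⬝ᵥ z
  map_add' := fun a b => dotProduct_add w a b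
  map_smul' := fun t a => by
    simp only [RingHom.id_apply]
    show w ⬝ᵥ (t • a) = t • (w ⬝ᵥ a)
    rw [dotProduct_smul]

end MF

/-- A nonempty face `F` of `K` is `(R×{0})`-minimal iff some `w ∈ Γ(F)`
satisfies `cᵀw < 0`. -/
theorem stmt14
    (m n q r : ℕ) (hm : 0 < m) (hn : 0 < n) (hq : 0 < q) (hr : 0 < r)
    (A : Matrix (Fin m) (Fin n) ℝ) (P : Matrix (Fin q) (Fin n) ℝ)
    (Z : Matrix (Fin q) (Fin r) ℝ) (b : Fin m → ℝ)
    (C : Set (Fin q → ℝ)) (hC : C = {y | 0 ≤ Zᵀ.mulVec y})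
    (hCpointed : C ∩ -C = {0}) (hCnontriv : C ≠ {0})
    (S : Set (Fin n → ℝ)) (hS : S = {x | b ≤ A.mulVec x}) (hSne : S.Nonempty)
    (cbar : Fin q → ℝ) (hcbar : cbar ∈ intrinsicInterior ℝ C)
    (hcq : cbar (lastIdx q hq) = 1)
    (c : Fin (q + 1) → ℝ) (hc : c = Fin.snoc cbar 0)
    (K : Set (Fin (q + 1) → ℝ))
    (hK : K = {y | ∃ x : Fin n → ℝ, 0 ≤ (Gmat A P Z).mulVec x + (Hmat b Z).mulVec y})
    (F : Set (Fin (q + 1) → ℝ)) (hF : IsFaceOf F K) (hFne : F.Nonempty) :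
    (∀ y ∈ F, ∀ ε : ℝ, 0 < ε → y - ε • c ∉ K) ↔
      ∃ w ∈ ⋂ y ∈ F, {w ∈ polarCone K | w ⬝ᵥ y = 0}, c ⬝ᵥ w < 0 := by
  classical
  constructor
  · -- (i) → (ii)
    intro hi
    obtain ⟨y₁, hy₁F⟩ := hFne
    -- a finite subset of differences spanning the span of all differences
    set D : Set (Fin (q+1) → ℝ) := (fun z => z - y₁) '' F with hD
    obtain ⟨Gn, hGn⟩ : (Submodule.span ℝ D).FG := IsNoetherian.noetherian _
    have hmem : ∀ x ∈ Gn, ∃ T : Finset (Fin (q+1) → ℝ),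
        ↑T ⊆ D ∧ x ∈ Submodule.span ℝ (T : Set (Fin (q+1) → ℝ)) := by
      intro x hx
      exact Submodule.mem_span_finite_of_mem_span
        (hGn ▸ Submodule.subset_span (Finset.mem_coe.mpr hx))
    choose T hT1 hT2 using hmem
    set T0 : Finset (Fin (q+1) → ℝ) := Gn.attach.biUnion (fun x => T x x.2) with hT0
    have hT0D : (T0 : Set (Fin (q+1) → ℝ)) ⊆ D := by
      intro t ht
      rw [Finset.mem_coe, hT0, Finset.mem_biUnion] at ht
      obtain ⟨x, _, hx2⟩ := ht
      exact hT1 x x.2 hx2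
    have hspan : Submodule.span ℝ D ≤ Submodule.span ℝ (T0 : Set (Fin (q+1) → ℝ)) := by
      rw [← hGn, Submodule.span_le]
      intro x hx
      rw [Finset.mem_coe] at hx
      refine Submodule.span_mono ?_ (hT2 x hx)
      intro t ht
      rw [Finset.mem_coe, hT0, Finset.mem_biUnion]
      exact ⟨⟨x, hx⟩, Finset.mem_attach _ _, ht⟩
    -- the centroid y₀ of the finite point set s₀ ⊆ F
    set s₀ : Finset (Fin (q+1) → ℝ) := insert y₁ (T0.image (· + y₁)) with hs₀
    have hs₀F : ∀ z ∈ s₀, z ∈ F := by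
      intro z hz
      rcases Finset.mem_insert.mp hz with rfl | hz'
      · exact hy₁F
      · obtain ⟨t, ht, rfl⟩ := Finset.mem_image.mp hz'
        obtain ⟨zz, hzz, hzzt⟩ := hT0D ht
        rw [← hzzt, sub_add_cancel]
        exact hzz
    have hy₁s₀ : y₁ ∈ s₀ := Finset.mem_insert_self _ _
    have hcard : (0:ℝ) < (s₀.card : ℝ) := by
      have : 0 < s₀.card := Finset.card_pos.mpr ⟨y₁, hy₁s₀⟩
      exact_mod_cast this
    set y₀ : Fin (q+1) → ℝ := (s₀.card : ℝ)⁻¹ • ∑ z ∈ s₀, z with hy₀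
    have hy₀F : y₀ ∈ F := by
      have h := hF.1.sum_mem (t := s₀) (w := fun _ => (s₀.card:ℝ)⁻¹) (z := id)
        (fun i _ => by positivity)
        (by simp [Finset.sum_const, nsmul_eq_mul, mul_inv_cancel₀ hcard.ne'])
        (fun i hi => hs₀F i hi)
      rw [hy₀, Finset.smul_sum]
      simpa using h
    obtain ⟨x₀, hx₀⟩ : ∃ x : Fin n → ℝ,
        0 ≤ (Gmat A P Z).mulVec x + (Hmat b Z).mulVec y₀ := by
      have := hF.2.1 hy₀F
      rw [hK] at this
      exact this
    set Gm := Gmat A P Z with hGm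
    set Hm := Hmat b Z with hHm
    -- Farkas system
    set M : Matrix ((Fin (m+r+1)) ⊕ Unit) ((Fin n) ⊕ Unit) ℝ :=
      fun i j => match i, j with
        | Sum.inl i, Sum.inl j => Gm i j
        | Sum.inl i, Sum.inr _ => Hm.mulVec y₀ i
        | Sum.inr _, Sum.inl _ => 0
        | Sum.inr _, Sum.inr _ => 1 with hM
    set dd : (Fin (m+r+1)) ⊕ Unit → ℝ := Sum.elim (Hm.mulVec c) 0 with hdd
    have hinf : ¬ ∃ z : (Fin n) ⊕ Unit → ℝ, ∀ i, dd i ≤ M.mulVec z i := by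
      rintro ⟨z, hz⟩
      set x : Fin n → ℝ := fun j => z (Sum.inl j) with hx
      set lam : ℝ := z (Sum.inr ()) with hlamdef
      have hlam : 0 ≤ lam := by
        have h := hz (Sum.inr ())
        simpa [hM, hdd, Matrix.mulVec, dotProduct, Fintype.sum_sum_type] using h
      have hrow : ∀ i : Fin (m+r+1),
          Hm.mulVec c i ≤ Gm.mulVec x i + Hm.mulVec y₀ i * lam := by
        intro i
        have h := hz (Sum.inl i)
        simpa [hM, hdd, Matrix.mulVec, dotProduct, Fintype.sum_sum_type,
          mul_comm] using h
      rcases eq_or_lt_of_le hlam with heq | hpos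
      · refine hi y₀ hy₀F 1 one_pos ?_
        rw [hK]
        refine ⟨x₀ + x, fun i => ?_⟩
        have h1 := hx₀ i
        have h2 := hrow i
        rw [← heq, mul_zero] at h2
        simp only [Matrix.mulVec_add, Matrix.mulVec_sub, one_smul, Pi.add_apply,
          Pi.sub_apply, Pi.zero_apply] at h1 ⊢
        linarith
      · refine hi y₀ hy₀F lam⁻¹ (by positivity) ?_
        rw [hK]
        refine ⟨lam⁻¹ • x, fun i => ?_⟩
        have h1 := mul_le_mul_of_nonneg_left (hrow i) (inv_nonneg.mpr hlam)
        have h3 : lam⁻¹ * (Hm.mulVec y₀ i * lam) = Hm.mulVec y₀ i := by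
          field_simp
        simp only [Matrix.mulVec_smul, Matrix.mulVec_sub, Pi.add_apply, Pi.sub_apply,
          Pi.smul_apply, smul_eq_mul, Pi.zero_apply, mul_add] at h1 ⊢
        linarith
    obtain ⟨u', hu'0, hu'col, hu'd⟩ := matrix_farkas M dd hinf
    set u : Fin (m+r+1) → ℝ := fun i => u' (Sum.inl i) with hu
    have hun : ∀ i, 0 ≤ u i := fun i => hu'0 _
    set mu : ℝ := u' (Sum.inr ()) with hmu
    have hmu0 : 0 ≤ mu := hu'0 _
    have hcol : ∀ j : Fin n, ∑ i, Gm i j * u i = 0 := by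
      intro j
      have h := hu'col (Sum.inl j)
      simpa [hM, Fintype.sum_sum_type] using h
    have hcollast : ∑ i, Hm.mulVec y₀ i * u i + mu = 0 := by
      have h := hu'col (Sum.inr ())
      simpa [hM, Fintype.sum_sum_type] using h
    have hdpos : 0 < ∑ i, Hm.mulVec c i * u i := by
      simpa [hdd, Fintype.sum_sum_type] using hu'd
    have hkey : ∀ y ∈ K, 0 ≤ ∑ i, Hm.mulVec y i * u i := by
      intro y hy
      rw [hK] at hy
      obtain ⟨x, hx⟩ := hy
      have h1 : 0 ≤ ∑ i, (Gm.mulVec x i + Hm.mulVec y i) * u i :=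
        Finset.sum_nonneg fun i _ => mul_nonneg (by simpa using hx i) (hun i)
      have h2 : ∑ i, Gm.mulVec x i * u i = 0 := by
        have hsw := sum_mul_swap Gm u x
        have : ∑ i, Gm.mulVec x i * u i = ∑ j, (∑ i, Gm i j * u i) * x j := by
          rw [hsw]
          exact Finset.sum_congr rfl fun i _ => by
            simp [Matrix.mulVec, dotProduct]
        rw [this]
        simp [hcol]
      simp only [add_mul, Finset.sum_add_distrib, h2, zero_add] at h1
      exact h1
    set w : Fin (q+1) → ℝ := fun k => -∑ i, Hm i k * u i with hw
    have hwdot : ∀ y : Fin (q+1) → ℝ, w ⬝ᵥ y = -∑ i, Hm.mulVec y i * u i := by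
      intro y
      show ∑ k, w k * y k = _
      calc ∑ k, (-∑ i, Hm i k * u i) * y k
          = -∑ k, (∑ i, Hm i k * u i) * y k := by
            simp [neg_mul]
        _ = -∑ i, (∑ k, Hm i k * y k) * u i := by rw [sum_mul_swap]
        _ = -∑ i, Hm.mulVec y i * u i := rfl
    have hwpolar : w ∈ polarCone K := by
      intro y hy
      rw [hwdot]
      have := hkey y hy
      linarith
    have hwy₀ : w ⬝ᵥ y₀ = 0 := by
      rw [hwdot]
      have h1 := hkey y₀ (hF.2.1 hy₀F)
      linarith
    have hdotsum : w ⬝ᵥ (∑ z ∈ s₀, z) = ∑ z ∈ s₀, w ⬝ᵥ z := by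
      simp only [dotProduct, Finset.sum_apply, Finset.mul_sum]
      exact Finset.sum_comm
    have hφ : ∀ z ∈ s₀, w ⬝ᵥ z = 0 := by
      have hsum0 : ∑ z ∈ s₀, w ⬝ᵥ z = 0 := by
        have h1 : w ⬝ᵥ y₀ = (s₀.card:ℝ)⁻¹ * ∑ z ∈ s₀, w ⬝ᵥ z := by
          rw [hy₀, dotProduct_smul, hdotsum, smul_eq_mul]
        rw [hwy₀] at h1
        have h2 := h1.symm
        rcases mul_eq_zero.mp h2 with h3 | h3
        · exact absurd h3 (inv_ne_zero hcard.ne')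
        · exact h3
      have hnp : ∀ z ∈ s₀, w ⬝ᵥ z ≤ 0 := fun z hz => hwpolar z (hF.2.1 (hs₀F z hz))
      intro z hz
      exact (Finset.sum_eq_zero_iff_of_nonpos hnp).mp hsum0 z hz
    have hFzero : ∀ z ∈ F, w ⬝ᵥ z = 0 := by
      have hker : Submodule.span ℝ (T0 : Set (Fin (q+1) → ℝ)) ≤
          LinearMap.ker (dotLin w) := by
        rw [Submodule.span_le]
        intro t ht
        rw [SetLike.mem_coe, LinearMap.mem_ker]
        have h1 : w ⬝ᵥ (t + y₁) = 0 := by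
          refine hφ (t + y₁) ?_
          rw [hs₀]
          refine Finset.mem_insert_of_mem (Finset.mem_image.mpr ⟨t, ?_, rfl⟩)
          exact Finset.mem_coe.mp ht
        have h2 : w ⬝ᵥ y₁ = 0 := hφ y₁ hy₁s₀
        show w ⬝ᵥ t = 0
        have h3 : t = (t + y₁) - y₁ := by ring
        rw [h3, dotProduct_sub, h1, h2, sub_zero]
      intro z hzF
      have hz1 : z - y₁ ∈ Submodule.span ℝ D :=
        Submodule.subset_span ⟨z, hzF, rfl⟩
      have hz2 := hker (hspan hz1)
      rw [LinearMap.mem_ker] at hz2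
      have hz3 : w ⬝ᵥ (z - y₁) = 0 := hz2
      rw [dotProduct_sub, hφ y₁ hy₁s₀, sub_zero] at hz3
      exact hz3
    refine ⟨w, ?_, ?_⟩
    · exact Set.mem_iInter₂.mpr fun z hz => ⟨hwpolar, hFzero z hz⟩
    · rw [dotProduct_comm, hwdot]
      linarith
  · -- (ii) → (i)
    rintro ⟨w, hwmem, hcw⟩ y hyF ε hε hmemK
    have hw := Set.mem_iInter₂.mp hwmem y hyF
    obtain ⟨hpol, hzero⟩ := hw
    have h1 : w ⬝ᵥ (y - ε • c) ≤ 0 := hpol _ hmemK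
    have h2 : w ⬝ᵥ (y - ε • c) = w ⬝ᵥ y - ε * (w ⬝ᵥ c) := by
      rw [dotProduct_sub, dotProduct_smul, smul_eq_mul]
    have h3 : w ⬝ᵥ c = c ⬝ᵥ w := dotProduct_comm _ _
    have h4 : 0 < ε * -(c ⬝ᵥ w) := mul_pos hε (neg_pos.mpr hcw)
    rw [h2, hzero, h3] at h1
    linarith
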